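/- arXiv:2202.03336 — 2 statements merged into one kernel-verified Lean document; each statement's English description precedes it below -/
import Mathlib

section
/- Let q be a real-valued continuously differentiable function on [0,1] and for λ = k² let S(·,λ) be the solution of −y''(x) + q(x)y(x) = λ y(x) on [0,1] with S(0,λ) = 0, S'(0,λ) = 1. Then, with Q(x) = (1/2)∫₀ˣ q(t)dt and τ = |Im k|, one has S(x,λ) = sin(kx)/k − (cos(kx)/k²)·Q(x) + O(k⁻³ exp(τx)) as |λ| → ∞, uniformly for x ∈ [0,1]. -/
open Set Filter Asymptotics

/-- `y`, with derivative `y'`, solves `-y'' + q y = lam y` on `[0,1]`. -/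
def IsSLSolution (q : ℝ → ℝ) (lam : ℂ) (y y' : ℝ → ℂ) : Prop :=
  (∀ x ∈ Set.Icc (0:ℝ) 1, HasDerivWithinAt y (y' x) (Set.Icc 0 1) x) ∧
  (∀ x ∈ Set.Icc (0:ℝ) 1, HasDerivWithinAt y' (((q x : ℂ) - lam) * y x) (Set.Icc 0 1) x)

open intervalIntegral


lemma norm_sin_le' (z : ℂ) : ‖Complex.sin z‖ ≤ Real.exp |z.im| := by
  rw [Complex.sin]
  calc ‖(Complex.exp (-z*Complex.I) - Complex.exp (z*Complex.I)) * Complex.I / 2‖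
      = (‖Complex.exp (-z*Complex.I) - Complex.exp (z*Complex.I)‖) / 2 := by
        simp [norm_div, norm_mul]
    _ ≤ (‖Complex.exp (-z*Complex.I)‖ + ‖Complex.exp (z*Complex.I)‖) / 2 := by
        gcongr; exact norm_sub_le _ _
    _ ≤ (Real.exp |z.im| + Real.exp |z.im|) / 2 := by
        rw [Complex.norm_exp, Complex.norm_exp]
        gcongr <;> simp <;> [exact le_abs_self z.im; exact neg_le_abs z.im]
    _ = Real.exp |z.im| := by ring

lemma norm_cos_le' (z : ℂ) : ‖Complex.cos z‖ ≤ Real.exp |z.im| := by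
  rw [Complex.cos]
  calc ‖(Complex.exp (z*Complex.I) + Complex.exp (-z*Complex.I)) / 2‖
      = (‖Complex.exp (z*Complex.I) + Complex.exp (-z*Complex.I)‖) / 2 := by
        simp [norm_div]
    _ ≤ (‖Complex.exp (z*Complex.I)‖ + ‖Complex.exp (-z*Complex.I)‖) / 2 := by
        gcongr; exact norm_add_le _ _
    _ ≤ (Real.exp |z.im| + Real.exp |z.im|) / 2 := by
        rw [Complex.norm_exp, Complex.norm_exp]
        gcongr <;> simp <;> [exact neg_le_abs z.im; exact le_abs_self z.im]
    _ = Real.exp |z.im| := by ring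

lemma hasDerivAt_csin (k : ℂ) (t : ℝ) :
    HasDerivAt (fun u : ℝ => Complex.sin (k * u)) (k * Complex.cos (k * t)) t := by
  have h1 : HasDerivAt (fun z : ℂ => Complex.sin (k * z)) (k * Complex.cos (k * t)) (t : ℂ) := by
    simpa [mul_comm, Function.comp_def] using ((Complex.hasDerivAt_sin (k * t)).comp (t:ℂ)
      ((hasDerivAt_id (t:ℂ)).const_mul k))
  exact h1.comp_ofReal

lemma hasDerivAt_ccos (k : ℂ) (t : ℝ) :
    HasDerivAt (fun u : ℝ => Complex.cos (k * u)) (-(k * Complex.sin (k * t))) t := by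
  have h1 : HasDerivAt (fun z : ℂ => Complex.cos (k * z)) (-(k * Complex.sin (k * t))) (t : ℂ) := by
    have := ((Complex.hasDerivAt_cos (k * t)).comp (t:ℂ) ((hasDerivAt_id (t:ℂ)).const_mul k))
    simpa [mul_comm, Function.comp_def] using this
  exact h1.comp_ofReal

lemma norm_sin_mul_le (k : ℂ) (r : ℝ) :
    ‖Complex.sin (k * r)‖ ≤ Real.exp (|k.im| * |r|) := by
  have : (k * (r:ℂ)).im = k.im * r := by simp
  calc ‖Complex.sin (k * r)‖ ≤ Real.exp |(k * (r:ℂ)).im| := norm_sin_le' _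
    _ = Real.exp (|k.im| * |r|) := by rw [this, abs_mul]

lemma norm_cos_mul_le (k : ℂ) (r : ℝ) :
    ‖Complex.cos (k * r)‖ ≤ Real.exp (|k.im| * |r|) := by
  have : (k * (r:ℂ)).im = k.im * r := by simp
  calc ‖Complex.cos (k * r)‖ ≤ Real.exp |(k * (r:ℂ)).im| := norm_cos_le' _
    _ = Real.exp (|k.im| * |r|) := by rw [this, abs_mul]

lemma inteq (q : ℝ → ℝ) (hqc : ContinuousOn q (Icc 0 1)) (k : ℂ) (hk : k ≠ 0)
    (S S' : ℝ → ℂ) (hsol : IsSLSolution q (k^2) S S') (hS0 : S 0 = 0) (hS'0 : S' 0 = 1)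
    (x : ℝ) (hx : x ∈ Icc (0:ℝ) 1) :
    S x = Complex.sin (k*x)/k
      + (∫ t in (0:ℝ)..x, Complex.sin (k*((x - t : ℝ):ℂ)) * q t * S t) / k := by
  obtain ⟨hx0, hx1⟩ := hx
  have hsub : Icc (0:ℝ) x ⊆ Icc 0 1 := Icc_subset_Icc le_rfl hx1
  have hsub' : Ioo (0:ℝ) x ⊆ Ioo 0 1 := Ioo_subset_Ioo le_rfl hx1
  have hScont : ContinuousOn S (Icc 0 1) := fun t ht =>
    ((hsol.1 t ht).differentiableWithinAt).continuousWithinAt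
  have hS'cont : ContinuousOn S' (Icc 0 1) := fun t ht =>
    ((hsol.2 t ht).differentiableWithinAt).continuousWithinAt
  have hS : ∀ t ∈ Ioo (0:ℝ) 1, HasDerivAt S (S' t) t := fun t ht =>
    (hsol.1 t (Ioo_subset_Icc_self ht)).hasDerivAt (Icc_mem_nhds ht.1 ht.2)
  have hS' : ∀ t ∈ Ioo (0:ℝ) 1, HasDerivAt S' (((q t : ℂ) - k^2) * S t) t := fun t ht =>
    (hsol.2 t (Ioo_subset_Icc_self ht)).hasDerivAt (Icc_mem_nhds ht.1 ht.2)
  have hsinc : Continuous fun t : ℝ => Complex.sin (k * t) :=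
    Complex.continuous_sin.comp (continuous_const.mul Complex.continuous_ofReal)
  have hcosc : Continuous fun t : ℝ => Complex.cos (k * t) :=
    Complex.continuous_cos.comp (continuous_const.mul Complex.continuous_ofReal)
  have hqcc : ContinuousOn (fun t : ℝ => (q t : ℂ)) (Icc 0 1) :=
    Complex.continuous_ofReal.comp_continuousOn hqc
  set f : ℝ → ℂ := fun t => (q t : ℂ) * S t * Complex.sin (k*t) / k with hf
  set g : ℝ → ℂ := fun t => (q t : ℂ) * S t * Complex.cos (k*t) / k with hg
  have hfcont : ContinuousOn f (Icc 0 1) :=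
    ((hqcc.mul hScont).mul hsinc.continuousOn).div_const k
  have hgcont : ContinuousOn g (Icc 0 1) :=
    ((hqcc.mul hScont).mul hcosc.continuousOn).div_const k
  have hfint : IntervalIntegrable f MeasureTheory.volume 0 x :=
    (hfcont.mono (by rw [uIcc_of_le hx0]; exact hsub)).intervalIntegrable
  have hgint : IntervalIntegrable g MeasureTheory.volume 0 x :=
    (hgcont.mono (by rw [uIcc_of_le hx0]; exact hsub)).intervalIntegrable
  set a : ℝ → ℂ := fun t => S' t * Complex.sin (k*t)/k - S t * Complex.cos (k*t) with ha
  set b : ℝ → ℂ := fun t => S' t * Complex.cos (k*t)/k + S t * Complex.sin (k*t) with hb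
  have hacont : ContinuousOn a (Icc 0 1) :=
    ((hS'cont.mul hsinc.continuousOn).div_const k).sub (hScont.mul hcosc.continuousOn)
  have hbcont : ContinuousOn b (Icc 0 1) :=
    ((hS'cont.mul hcosc.continuousOn).div_const k).add (hScont.mul hsinc.continuousOn)
  have hada : ∀ t ∈ Ioo (0:ℝ) 1, HasDerivAt a (f t) t := by
    intro t ht
    have h1 := (((hS' t ht).mul (hasDerivAt_csin k t)).div_const k).sub
      ((hS t ht).mul (hasDerivAt_ccos k t))
    refine h1.congr_deriv ?_
    simp only [hf]
    field_simp
    ring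
  have hbdb : ∀ t ∈ Ioo (0:ℝ) 1, HasDerivAt b (g t) t := by
    intro t ht
    have h1 := (((hS' t ht).mul (hasDerivAt_ccos k t)).div_const k).add
      ((hS t ht).mul (hasDerivAt_csin k t))
    refine h1.congr_deriv ?_
    simp only [hg]
    field_simp
    ring
  have hFa : ∫ t in (0:ℝ)..x, f t = a x - a 0 :=
    integral_eq_sub_of_hasDeriv_right_of_le hx0 (hacont.mono hsub)
      (fun t ht => ((hada t (hsub' ht)).hasDerivWithinAt)) hfint
  have hFb : ∫ t in (0:ℝ)..x, g t = b x - b 0 :=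
    integral_eq_sub_of_hasDeriv_right_of_le hx0 (hbcont.mono hsub)
      (fun t ht => ((hbdb t (hsub' ht)).hasDerivWithinAt)) hgint
  have ha0 : a 0 = 0 := by simp [ha, hS0, hS'0]
  have hb0 : b 0 = 1/k := by simp [hb, hS0, hS'0]
  have hSx : S x = b x * Complex.sin (k*x) - a x * Complex.cos (k*x) := by
    simp only [ha, hb]
    have h := Complex.sin_sq_add_cos_sq (k * x)
    linear_combination (-(S x)) * h
  have hintrw : (∫ t in (0:ℝ)..x, Complex.sin (k*((x - t : ℝ):ℂ)) * q t * S t) / k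
      = Complex.sin (k*x) * (∫ t in (0:ℝ)..x, g t)
        - Complex.cos (k*x) * (∫ t in (0:ℝ)..x, f t) := by
    rw [← integral_div]
    have : ∀ t ∈ uIcc (0:ℝ) x, Complex.sin (k*((x - t : ℝ):ℂ)) * q t * S t / k
        = Complex.sin (k*x) * g t - Complex.cos (k*x) * f t := by
      intro t _
      simp only [hf, hg]
      push_cast
      rw [mul_sub, Complex.sin_sub]
      field_simp
    rw [integral_congr this, integral_sub (hgint.const_mul _) (hfint.const_mul _),
      integral_const_mul, integral_const_mul]
  rw [hSx]
  linear_combination -hintrw - Complex.sin (k*(x:ℂ)) * hFb + Complex.sin (k*(x:ℂ)) * hb0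
    + Complex.cos (k*(x:ℂ)) * hFa - Complex.cos (k*(x:ℂ)) * ha0

set_option maxHeartbeats 1600000 in
/-- Asymptotics of the solution `S(·, λ)` with `S(0,λ)=0`, `S'(0,λ)=1`, where `λ = k²`:
`S(x,λ) = sin kx / k - (cos kx / k²) Q(x) + O(k⁻³ e^{|Im k| x})`
as `|λ| → ∞`, uniformly for `x ∈ [0,1]`. -/
theorem stmt_1
    (q : ℝ → ℝ) (hq : ContDiffOn ℝ 1 q (Set.Icc 0 1))
    (S S' : ℂ → ℝ → ℂ)
    (hsol : ∀ k : ℂ, IsSLSolution q (k ^ 2) (S k) (S' k))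
    (hS0 : ∀ k : ℂ, S k 0 = 0) (hS'0 : ∀ k : ℂ, S' k 0 = 1) :
    ∃ M R : ℝ, 0 < M ∧ 0 < R ∧ ∀ k : ℂ, R ≤ ‖k‖ → ∀ x ∈ Set.Icc (0:ℝ) 1,
      ‖S k x - (Complex.sin (k * (x:ℂ)) / k -
          (Complex.cos (k * (x:ℂ)) / k ^ 2) * (((1/2) * ∫ t in (0:ℝ)..x, q t : ℝ) : ℂ))‖ ≤
        M * ‖k‖⁻¹ ^ 3 * Real.exp (|k.im| * x) := by
  -- bound on q
  obtain ⟨C0, hC0⟩ := isCompact_Icc.exists_bound_of_continuousOn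
    (Complex.continuous_ofReal.comp_continuousOn hq.continuousOn)
  set C : ℝ := max C0 0 + 1 with hC
  have hC1 : (1:ℝ) ≤ C := by have := le_max_right C0 0; linarith
  have hCpos : (0:ℝ) < C := lt_of_lt_of_le one_pos hC1
  have hqb : ∀ t ∈ Icc (0:ℝ) 1, |q t| ≤ C := by
    intro t ht
    have := hC0 t ht
    simp only [Function.comp_apply, Complex.norm_real, Real.norm_eq_abs] at this
    have h2 := le_max_left C0 0
    rw [hC]
    linarith
  -- bound on q'
  set q' : ℝ → ℝ := derivWithin q (Icc 0 1) with hq'def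
  have hq'cont : ContinuousOn q' (Icc 0 1) :=
    hq.continuousOn_derivWithin (uniqueDiffOn_Icc one_pos) le_rfl
  obtain ⟨C1, hC1'⟩ := isCompact_Icc.exists_bound_of_continuousOn
    (Complex.continuous_ofReal.comp_continuousOn hq'cont)
  set C' : ℝ := max C1 0 + 1 with hC'
  have hC'1 : (1:ℝ) ≤ C' := by have := le_max_right C1 0; linarith
  have hq'b : ∀ t ∈ Icc (0:ℝ) 1, |q' t| ≤ C' := by
    intro t ht
    have := hC1' t ht
    simp only [Function.comp_apply, Complex.norm_real, Real.norm_eq_abs] at this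
    have h2 := le_max_left C1 0
    rw [hC']
    linarith
  have hq'deriv : ∀ t ∈ Ioo (0:ℝ) 1, HasDerivAt q (q' t) t := by
    intro t ht
    exact (((hq.differentiableOn one_ne_zero) t (Ioo_subset_Icc_self ht)).hasDerivWithinAt).hasDerivAt
      (Icc_mem_nhds ht.1 ht.2)
  refine ⟨2*C^2 + (2*C + C')/4 + 1, 2*C + 1, by positivity, by positivity, ?_⟩
  intro k hkR
  have hk1 : (1:ℝ) ≤ ‖k‖ := le_trans (by linarith) hkR
  have hkpos : (0:ℝ) < ‖k‖ := lt_of_lt_of_le one_pos hk1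
  have hk0 : k ≠ 0 := by
    intro h; rw [h] at hkpos; simp at hkpos
  have h2C : 2*C ≤ ‖k‖ := le_trans (by linarith) hkR
  set τ := |k.im| with hτ
  have hτ0 : 0 ≤ τ := abs_nonneg _
  have hScont : ContinuousOn (S k) (Icc 0 1) := fun t ht =>
    ((hsol k).1 t ht).differentiableWithinAt.continuousWithinAt
  have hsinb : ∀ (y r : ℝ), |r| ≤ y → ‖Complex.sin (k*(r:ℂ))‖ ≤ Real.exp (τ*y) := by
    intro y r hr
    refine le_trans (norm_sin_mul_le k r) (Real.exp_le_exp.2 ?_)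
    exact mul_le_mul_of_nonneg_left hr hτ0
  have expprod : ∀ y t : ℝ, Real.exp (τ*(y-t)) * Real.exp (τ*t) = Real.exp (τ*y) := by
    intro y t; rw [← Real.exp_add]; ring_nf
  -- Step A: a priori bound
  have hwcont : ContinuousOn (fun t => ‖S k t‖ * Real.exp (-(τ*t))) (Icc 0 1) :=
    hScont.norm.mul (Real.continuous_exp.comp ((continuous_const.mul continuous_id).neg)).continuousOn
  obtain ⟨t₀, ht₀, hmax⟩ := isCompact_Icc.exists_isMaxOn (Set.nonempty_Icc.2 zero_le_one) hwcont
  set m := ‖S k t₀‖ * Real.exp (-(τ*t₀)) with hm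
  have hm0 : 0 ≤ m := mul_nonneg (norm_nonneg _) (Real.exp_pos _).le
  have hSm : ∀ t ∈ Icc (0:ℝ) 1, ‖S k t‖ ≤ m * Real.exp (τ*t) := by
    intro t ht
    have h1 := hmax ht
    have h2 : ‖S k t‖ = (‖S k t‖ * Real.exp (-(τ*t))) * Real.exp (τ*t) := by
      rw [mul_assoc, ← Real.exp_add]; simp
    rw [h2]
    exact mul_le_mul_of_nonneg_right h1 (Real.exp_pos _).le
  have hkey : ∀ y ∈ Icc (0:ℝ) 1, ‖S k y‖ ≤ (1/‖k‖ + C*m/‖k‖) * Real.exp (τ*y) := by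
    intro y hy
    have hEq := inteq q hq.continuousOn k hk0 (S k) (S' k) (hsol k) (hS0 k) (hS'0 k) y hy
    have hIb : ‖∫ t in (0:ℝ)..y, Complex.sin (k*((y - t : ℝ):ℂ)) * q t * S k t‖
        ≤ C*m*Real.exp (τ*y) * |y - 0| := by
      apply intervalIntegral.norm_integral_le_of_norm_le_const
      intro t ht
      rw [uIoc_of_le hy.1] at ht
      have ht1 : t ∈ Icc (0:ℝ) 1 := ⟨ht.1.le, ht.2.trans hy.2⟩
      have h1 : ‖Complex.sin (k*((y - t : ℝ):ℂ))‖ ≤ Real.exp (τ*(y - t)) := by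
        have h := norm_sin_mul_le k (y - t)
        rwa [abs_of_nonneg (by linarith [ht.2] : (0:ℝ) ≤ y - t)] at h
      calc ‖Complex.sin (k*((y - t : ℝ):ℂ)) * (q t : ℂ) * S k t‖
          = ‖Complex.sin (k*((y - t : ℝ):ℂ))‖ * |q t| * ‖S k t‖ := by
            rw [norm_mul, norm_mul, Complex.norm_real, Real.norm_eq_abs]
        _ ≤ Real.exp (τ*(y - t)) * C * (m * Real.exp (τ*t)) := by
            apply mul_le_mul (mul_le_mul h1 (hqb t ht1) (abs_nonneg _) (Real.exp_pos _).le)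
              (hSm t ht1) (norm_nonneg _) (by positivity)
        _ = C*m*Real.exp (τ*y) := by
            rw [show Real.exp (τ*(y-t)) * C * (m * Real.exp (τ*t))
              = C*m*(Real.exp (τ*(y-t)) * Real.exp (τ*t)) from by ring, expprod y t]
    rw [hEq]
    have h2 : ‖Complex.sin (k*(y:ℂ))/k‖ ≤ Real.exp (τ*y)/‖k‖ := by
      rw [norm_div]
      gcongr
      exact hsinb y y (by rw [abs_of_nonneg hy.1])
    have hy1 : |y - 0| ≤ 1 := by rw [sub_zero, abs_of_nonneg hy.1]; exact hy.2
    have hE := (Real.exp_pos (τ*y)).le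
    calc ‖Complex.sin (k*(y:ℂ))/k + (∫ t in (0:ℝ)..y, Complex.sin (k*((y - t : ℝ):ℂ)) * q t * S k t)/k‖
        ≤ ‖Complex.sin (k*(y:ℂ))/k‖
          + ‖(∫ t in (0:ℝ)..y, Complex.sin (k*((y - t : ℝ):ℂ)) * q t * S k t)/k‖ := norm_add_le _ _
      _ ≤ Real.exp (τ*y)/‖k‖ + (C*m*Real.exp (τ*y) * |y - 0|)/‖k‖ := by
          refine add_le_add h2 ?_
          rw [norm_div]
          gcongr
      _ ≤ Real.exp (τ*y)/‖k‖ + (C*m*Real.exp (τ*y))/‖k‖ := by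
          refine add_le_add le_rfl ((div_le_div_iff_of_pos_right hkpos).2 ?_)
          calc C*m*Real.exp (τ*y) * |y-0| ≤ C*m*Real.exp (τ*y) * 1 := by
                refine mul_le_mul_of_nonneg_left hy1 (by positivity)
            _ = C*m*Real.exp (τ*y) := mul_one _
      _ = (1/‖k‖ + C*m/‖k‖) * Real.exp (τ*y) := by ring
  have hm2 : m ≤ 2/‖k‖ := by
    have h1 := hkey t₀ ht₀
    have h2 : Real.exp (τ*t₀) * Real.exp (-(τ*t₀)) = 1 := by rw [← Real.exp_add]; simp
    have h3 : m ≤ 1/‖k‖ + C*m/‖k‖ := by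
      calc m = ‖S k t₀‖ * Real.exp (-(τ*t₀)) := hm
        _ ≤ ((1/‖k‖ + C*m/‖k‖) * Real.exp (τ*t₀)) * Real.exp (-(τ*t₀)) :=
            mul_le_mul_of_nonneg_right h1 (Real.exp_pos _).le
        _ = (1/‖k‖ + C*m/‖k‖) * (Real.exp (τ*t₀) * Real.exp (-(τ*t₀))) := by ring
        _ = 1/‖k‖ + C*m/‖k‖ := by rw [h2, mul_one]
    rw [le_div_iff₀ hkpos]
    have h4 : m * ‖k‖ ≤ 1 + C*m := by
      have h5 := mul_le_mul_of_nonneg_right h3 hkpos.le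
      calc m*‖k‖ ≤ (1/‖k‖ + C*m/‖k‖)*‖k‖ := h5
        _ = 1 + C*m := by
            rw [add_mul, div_mul_cancel₀ _ hkpos.ne', div_mul_cancel₀ _ hkpos.ne']
    linarith [mul_le_mul_of_nonneg_left h2C hm0]
  have hSbound : ∀ t ∈ Icc (0:ℝ) 1, ‖S k t‖ ≤ 2*Real.exp (τ*t)/‖k‖ := by
    intro t ht
    calc ‖S k t‖ ≤ m * Real.exp (τ*t) := hSm t ht
      _ ≤ (2/‖k‖) * Real.exp (τ*t) := mul_le_mul_of_nonneg_right hm2 (Real.exp_pos _).le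
      _ = 2*Real.exp (τ*t)/‖k‖ := by ring
  -- Step B: first order estimate
  have hR1 : ∀ y ∈ Icc (0:ℝ) 1, ‖S k y - Complex.sin (k*(y:ℂ))/k‖
      ≤ 2*C*Real.exp (τ*y)/‖k‖^2 := by
    intro y hy
    have hEq := inteq q hq.continuousOn k hk0 (S k) (S' k) (hsol k) (hS0 k) (hS'0 k) y hy
    have hEq2 : S k y - Complex.sin (k*(y:ℂ))/k
        = (∫ t in (0:ℝ)..y, Complex.sin (k*((y - t : ℝ):ℂ)) * q t * S k t)/k := by
      rw [hEq]; ring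
    have hIb : ‖∫ t in (0:ℝ)..y, Complex.sin (k*((y - t : ℝ):ℂ)) * q t * S k t‖
        ≤ 2*C*Real.exp (τ*y)/‖k‖ * |y - 0| := by
      apply intervalIntegral.norm_integral_le_of_norm_le_const
      intro t ht
      rw [uIoc_of_le hy.1] at ht
      have ht1 : t ∈ Icc (0:ℝ) 1 := ⟨ht.1.le, ht.2.trans hy.2⟩
      have h1 : ‖Complex.sin (k*((y - t : ℝ):ℂ))‖ ≤ Real.exp (τ*(y - t)) := by
        have h := norm_sin_mul_le k (y - t)
        rwa [abs_of_nonneg (by linarith [ht.2] : (0:ℝ) ≤ y - t)] at h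
      calc ‖Complex.sin (k*((y - t : ℝ):ℂ)) * (q t : ℂ) * S k t‖
          = ‖Complex.sin (k*((y - t : ℝ):ℂ))‖ * |q t| * ‖S k t‖ := by
            rw [norm_mul, norm_mul, Complex.norm_real, Real.norm_eq_abs]
        _ ≤ Real.exp (τ*(y - t)) * C * (2*Real.exp (τ*t)/‖k‖) := by
            apply mul_le_mul (mul_le_mul h1 (hqb t ht1) (abs_nonneg _) (Real.exp_pos _).le)
              (hSbound t ht1) (norm_nonneg _) (by positivity)
        _ = 2*C*Real.exp (τ*y)/‖k‖ := by
            rw [show Real.exp (τ*(y-t)) * C * (2*Real.exp (τ*t)/‖k‖)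
              = 2*C*(Real.exp (τ*(y-t)) * Real.exp (τ*t))/‖k‖ from by ring, expprod y t]
    have hy1 : |y - 0| ≤ 1 := by rw [sub_zero, abs_of_nonneg hy.1]; exact hy.2
    calc ‖S k y - Complex.sin (k*(y:ℂ))/k‖
        = ‖∫ t in (0:ℝ)..y, Complex.sin (k*((y - t : ℝ):ℂ)) * q t * S k t‖/‖k‖ := by
          rw [hEq2, norm_div]
      _ ≤ (2*C*Real.exp (τ*y)/‖k‖ * |y - 0|)/‖k‖ := by gcongr
      _ ≤ (2*C*Real.exp (τ*y)/‖k‖ * 1)/‖k‖ := by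
          refine (div_le_div_iff_of_pos_right hkpos).2 (mul_le_mul_of_nonneg_left hy1 (by positivity))
      _ = 2*C*Real.exp (τ*y)/‖k‖^2 := by field_simp
  intro x hx
  obtain ⟨hx0, hx1⟩ := hx
  have hxIcc : x ∈ Icc (0:ℝ) 1 := ⟨hx0, hx1⟩
  have hEq := inteq q hq.continuousOn k hk0 (S k) (S' k) (hsol k) (hS0 k) (hS'0 k) x hxIcc
  have huIcc : uIcc (0:ℝ) x = Icc 0 x := uIcc_of_le hx0
  have hsub : Icc (0:ℝ) x ⊆ Icc 0 1 := Icc_subset_Icc le_rfl hx1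
  have hqcc : ContinuousOn (fun t : ℝ => (q t : ℂ)) (Icc 0 1) :=
    Complex.continuous_ofReal.comp_continuousOn hq.continuousOn
  have hq'cc : ContinuousOn (fun t : ℝ => (q' t : ℂ)) (Icc 0 1) :=
    Complex.continuous_ofReal.comp_continuousOn hq'cont
  have hsinc : Continuous fun t : ℝ => Complex.sin (k*(t:ℂ)) :=
    Complex.continuous_sin.comp (continuous_const.mul Complex.continuous_ofReal)
  have hsinxc : Continuous fun t : ℝ => Complex.sin (k*((x - t : ℝ):ℂ)) :=
    Complex.continuous_sin.comp (continuous_const.mul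
      (Complex.continuous_ofReal.comp (continuous_const.sub continuous_id)))
  have hsin2c : Continuous fun t : ℝ => Complex.sin (k*((x - 2*t : ℝ):ℂ)) :=
    Complex.continuous_sin.comp (continuous_const.mul
      (Complex.continuous_ofReal.comp (continuous_const.sub (continuous_const.mul continuous_id))))
  have hcos2c : Continuous fun t : ℝ => Complex.cos (k*((x - 2*t : ℝ):ℂ)) :=
    Complex.continuous_cos.comp (continuous_const.mul
      (Complex.continuous_ofReal.comp (continuous_const.sub (continuous_const.mul continuous_id))))
  set I1 : ℂ := ∫ t in (0:ℝ)..x,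
    Complex.sin (k*((x - t : ℝ):ℂ)) * q t * (S k t - Complex.sin (k*(t:ℂ))/k) with hI1
  set J : ℂ := ∫ t in (0:ℝ)..x, (q t : ℂ) * Complex.cos (k*((x - 2*t : ℝ):ℂ)) with hJ
  have hi1int : IntervalIntegrable
      (fun t => Complex.sin (k*((x - t : ℝ):ℂ)) * q t * (S k t - Complex.sin (k*(t:ℂ))/k))
      MeasureTheory.volume 0 x := by
    apply ContinuousOn.intervalIntegrable
    rw [huIcc]
    exact (hsinxc.continuousOn.mul (hqcc.mono hsub)).mul
      ((hScont.mono hsub).sub (hsinc.continuousOn.div_const k))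
  have hi2int : IntervalIntegrable
      (fun t => Complex.sin (k*((x - t : ℝ):ℂ)) * q t * (Complex.sin (k*(t:ℂ))/k))
      MeasureTheory.volume 0 x := by
    apply ContinuousOn.intervalIntegrable
    rw [huIcc]
    exact (hsinxc.continuousOn.mul (hqcc.mono hsub)).mul (hsinc.continuousOn.div_const k)
  have hJint : IntervalIntegrable (fun t => (q t : ℂ) * Complex.cos (k*((x - 2*t : ℝ):ℂ)))
      MeasureTheory.volume 0 x := by
    apply ContinuousOn.intervalIntegrable
    rw [huIcc]
    exact (hqcc.mono hsub).mul hcos2c.continuousOn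
  have hqconstint : IntervalIntegrable (fun t => (q t : ℂ) * Complex.cos (k*(x:ℂ)))
      MeasureTheory.volume 0 x := by
    apply ContinuousOn.intervalIntegrable
    rw [huIcc]
    exact (hqcc.mono hsub).mul continuousOn_const
  have hsplit : (∫ t in (0:ℝ)..x, Complex.sin (k*((x - t : ℝ):ℂ)) * q t * S k t)
      = I1 + ∫ t in (0:ℝ)..x, Complex.sin (k*((x - t : ℝ):ℂ)) * q t * (Complex.sin (k*(t:ℂ))/k) := by
    rw [hI1, ← integral_add hi1int hi2int]
    apply integral_congr
    intro t _
    ring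
  have htrig : ∀ t ∈ uIcc (0:ℝ) x,
      Complex.sin (k*((x - t : ℝ):ℂ)) * (q t : ℂ) * (Complex.sin (k*(t:ℂ))/k)
      = ((q t : ℂ) * Complex.cos (k*((x - 2*t : ℝ):ℂ)) - (q t : ℂ) * Complex.cos (k*(x:ℂ))) / (2*k) := by
    intro t _
    have hA : k*((x - t : ℝ):ℂ) - k*((t:ℝ):ℂ) = k*((x - 2*t : ℝ):ℂ) := by push_cast; ring
    have hB : k*((x - t : ℝ):ℂ) + k*((t:ℝ):ℂ) = k*(x:ℂ) := by push_cast; ring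
    have h1 := Complex.cos_sub (k*((x - t : ℝ):ℂ)) (k*((t:ℝ):ℂ))
    have h2 := Complex.cos_add (k*((x - t : ℝ):ℂ)) (k*((t:ℝ):ℂ))
    rw [hA] at h1
    rw [hB] at h2
    linear_combination ((q t : ℂ)/(2*k)) * h2 - ((q t : ℂ)/(2*k)) * h1
  have hint2 : (∫ t in (0:ℝ)..x, Complex.sin (k*((x - t : ℝ):ℂ)) * q t * (Complex.sin (k*(t:ℂ))/k))
      = (J - Complex.cos (k*(x:ℂ)) * ((∫ t in (0:ℝ)..x, q t : ℝ):ℂ)) / (2*k) := by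
    rw [integral_congr htrig, integral_div, integral_sub hJint hqconstint, hJ]
    congr 1
    rw [integral_mul_const, intervalIntegral.integral_ofReal]
    ring
  have hdecomp : S k x - (Complex.sin (k*(x:ℂ))/k
      - (Complex.cos (k*(x:ℂ))/k^2) * (((1/2) * ∫ t in (0:ℝ)..x, q t : ℝ):ℂ))
      = I1/k + J/(2*k^2) := by
    have hQ : (((1/2) * ∫ t in (0:ℝ)..x, q t : ℝ):ℂ) = ((∫ t in (0:ℝ)..x, q t : ℝ):ℂ)/2 := by
      push_cast; ring
    linear_combination hEq + (1/k)*hsplit + (1/k)*hint2 + (Complex.cos (k*(x:ℂ))/k^2)*hQ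
  -- bound on I1
  have hI1b : ‖I1‖ ≤ 2*C^2*Real.exp (τ*x)/‖k‖^2 := by
    have h := intervalIntegral.norm_integral_le_of_norm_le_const
      (C := 2*C^2*Real.exp (τ*x)/‖k‖^2) (f := fun t =>
        Complex.sin (k*((x - t : ℝ):ℂ)) * q t * (S k t - Complex.sin (k*(t:ℂ))/k))
      (a := 0) (b := x) ?_
    · rw [← hI1] at h
      calc ‖I1‖ ≤ 2*C^2*Real.exp (τ*x)/‖k‖^2 * |x - 0| := h
        _ ≤ 2*C^2*Real.exp (τ*x)/‖k‖^2 * 1 := by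
            refine mul_le_mul_of_nonneg_left ?_ (by positivity)
            rw [sub_zero, abs_of_nonneg hx0]; exact hx1
        _ = 2*C^2*Real.exp (τ*x)/‖k‖^2 := mul_one _
    · intro t ht
      rw [uIoc_of_le hx0] at ht
      have ht1 : t ∈ Icc (0:ℝ) 1 := ⟨ht.1.le, ht.2.trans hx1⟩
      have h1 : ‖Complex.sin (k*((x - t : ℝ):ℂ))‖ ≤ Real.exp (τ*(x - t)) := by
        have h := norm_sin_mul_le k (x - t)
        rwa [abs_of_nonneg (by linarith [ht.2] : (0:ℝ) ≤ x - t)] at h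
      calc ‖Complex.sin (k*((x - t : ℝ):ℂ)) * (q t : ℂ) * (S k t - Complex.sin (k*(t:ℂ))/k)‖
          = ‖Complex.sin (k*((x - t : ℝ):ℂ))‖ * |q t| * ‖S k t - Complex.sin (k*(t:ℂ))/k‖ := by
            rw [norm_mul, norm_mul, Complex.norm_real, Real.norm_eq_abs]
        _ ≤ Real.exp (τ*(x - t)) * C * (2*C*Real.exp (τ*t)/‖k‖^2) := by
            apply mul_le_mul (mul_le_mul h1 (hqb t ht1) (abs_nonneg _) (Real.exp_pos _).le)
              (hR1 t ht1) (norm_nonneg _) (by positivity)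
        _ = 2*C^2*Real.exp (τ*x)/‖k‖^2 := by
            rw [show Real.exp (τ*(x-t)) * C * (2*C*Real.exp (τ*t)/‖k‖^2)
              = 2*C^2*(Real.exp (τ*(x-t)) * Real.exp (τ*t))/‖k‖^2 from by ring, expprod x t]
  -- bound on J via integration by parts
  set F : ℝ → ℂ := fun t => (q t : ℂ) * (-Complex.sin (k*((x - 2*t : ℝ):ℂ)) / (2*k)) with hF
  have hsin2b : ∀ t ∈ Icc (0:ℝ) x, ‖Complex.sin (k*((x - 2*t : ℝ):ℂ))‖ ≤ Real.exp (τ*x) := by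
    intro t ht
    exact hsinb x (x - 2*t) (abs_le.2 ⟨by linarith [ht.2], by linarith [ht.1]⟩)
  have hFderiv : ∀ t ∈ Ioo (0:ℝ) x, HasDerivAt F
      ((q' t : ℂ) * (-Complex.sin (k*((x - 2*t : ℝ):ℂ)) / (2*k))
        + (q t : ℂ) * Complex.cos (k*((x - 2*t : ℝ):ℂ))) t := by
    intro t ht
    have ht1 : t ∈ Ioo (0:ℝ) 1 := ⟨ht.1, lt_of_lt_of_le ht.2 hx1⟩
    have hqd : HasDerivAt (fun u : ℝ => ((q u : ℝ):ℂ)) ((q' t : ℝ):ℂ) t :=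
      (hq'deriv t ht1).ofReal_comp
    have hw : HasDerivAt (fun u : ℝ => x - 2*u) (-2) t := by
      simpa using ((hasDerivAt_id t).const_mul 2).const_sub x
    have hs1 : HasDerivAt (fun u : ℝ => Complex.sin (k*((x - 2*u : ℝ):ℂ)))
        ((-2:ℝ) • (k * Complex.cos (k*((x - 2*t : ℝ):ℂ)))) t := by
      exact HasDerivAt.scomp t (hasDerivAt_csin k (x - 2*t)) hw
    have hFd := hqd.mul ((hs1.neg).div_const (2*k))
    refine hFd.congr_deriv ?_
    rw [Complex.real_smul, Pi.neg_apply]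
    push_cast
    field_simp
  have hFcont : ContinuousOn F (Icc 0 x) :=
    ((hqcc.mono hsub).mul ((hsin2c.continuousOn.neg).div_const (2*k)))
  have hGint : IntervalIntegrable (fun t => (q' t : ℂ) * (-Complex.sin (k*((x - 2*t : ℝ):ℂ)) / (2*k))
      + (q t : ℂ) * Complex.cos (k*((x - 2*t : ℝ):ℂ))) MeasureTheory.volume 0 x := by
    apply ContinuousOn.intervalIntegrable
    rw [huIcc]
    exact ((hq'cc.mono hsub).mul ((hsin2c.continuousOn.neg).div_const (2*k))).add
      ((hqcc.mono hsub).mul hcos2c.continuousOn)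
  have hq'sint : IntervalIntegrable (fun t => (q' t : ℂ) * (-Complex.sin (k*((x - 2*t : ℝ):ℂ)) / (2*k)))
      MeasureTheory.volume 0 x := by
    apply ContinuousOn.intervalIntegrable
    rw [huIcc]
    exact (hq'cc.mono hsub).mul ((hsin2c.continuousOn.neg).div_const (2*k))
  have hFTC : ∫ t in (0:ℝ)..x, ((q' t : ℂ) * (-Complex.sin (k*((x - 2*t : ℝ):ℂ)) / (2*k))
      + (q t : ℂ) * Complex.cos (k*((x - 2*t : ℝ):ℂ))) = F x - F 0 :=
    integral_eq_sub_of_hasDeriv_right_of_le hx0 hFcont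
      (fun t ht => (hFderiv t ht).hasDerivWithinAt) hGint
  have hJeq : J = (F x - F 0)
      - ∫ t in (0:ℝ)..x, (q' t : ℂ) * (-Complex.sin (k*((x - 2*t : ℝ):ℂ)) / (2*k)) := by
    rw [← hFTC, hJ, ← integral_sub hGint hq'sint]
    apply integral_congr
    intro t _
    ring
  have hnorm2k : ‖(2*k : ℂ)‖ = 2*‖k‖ := by
    rw [norm_mul]
    norm_num
  have hFxb : ‖F x‖ ≤ C*Real.exp (τ*x)/(2*‖k‖) := by
    rw [hF]
    simp only []
    rw [norm_mul, norm_div, norm_neg, Complex.norm_real, Real.norm_eq_abs, hnorm2k]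
    have h1 : ‖Complex.sin (k*((x - 2*x : ℝ):ℂ))‖ ≤ Real.exp (τ*x) :=
      hsin2b x ⟨hx0, le_rfl⟩
    calc |q x| * (‖Complex.sin (k*((x - 2*x : ℝ):ℂ))‖/(2*‖k‖))
        ≤ C * (Real.exp (τ*x)/(2*‖k‖)) := by
          apply mul_le_mul (hqb x hxIcc) ?_ (by positivity) hCpos.le
          gcongr
      _ = C*Real.exp (τ*x)/(2*‖k‖) := by ring
  have hF0b : ‖F 0‖ ≤ C*Real.exp (τ*x)/(2*‖k‖) := by
    rw [hF]
    simp only []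
    rw [norm_mul, norm_div, norm_neg, Complex.norm_real, Real.norm_eq_abs, hnorm2k]
    have h1 : ‖Complex.sin (k*((x - 2*0 : ℝ):ℂ))‖ ≤ Real.exp (τ*x) :=
      hsin2b 0 ⟨le_rfl, hx0⟩
    calc |q 0| * (‖Complex.sin (k*((x - 2*0 : ℝ):ℂ))‖/(2*‖k‖))
        ≤ C * (Real.exp (τ*x)/(2*‖k‖)) := by
          apply mul_le_mul (hqb 0 (left_mem_Icc.2 zero_le_one)) ?_ (by positivity) hCpos.le
          gcongr
      _ = C*Real.exp (τ*x)/(2*‖k‖) := by ring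
  have hq'ib : ‖∫ t in (0:ℝ)..x, (q' t : ℂ) * (-Complex.sin (k*((x - 2*t : ℝ):ℂ)) / (2*k))‖
      ≤ C'*Real.exp (τ*x)/(2*‖k‖) := by
    have h := intervalIntegral.norm_integral_le_of_norm_le_const
      (C := C'*Real.exp (τ*x)/(2*‖k‖))
      (f := fun t => (q' t : ℂ) * (-Complex.sin (k*((x - 2*t : ℝ):ℂ)) / (2*k)))
      (a := 0) (b := x) ?_
    · calc ‖∫ t in (0:ℝ)..x, (q' t : ℂ) * (-Complex.sin (k*((x - 2*t : ℝ):ℂ)) / (2*k))‖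
          ≤ C'*Real.exp (τ*x)/(2*‖k‖) * |x - 0| := h
        _ ≤ C'*Real.exp (τ*x)/(2*‖k‖) * 1 := by
            refine mul_le_mul_of_nonneg_left ?_ (by positivity)
            rw [sub_zero, abs_of_nonneg hx0]; exact hx1
        _ = C'*Real.exp (τ*x)/(2*‖k‖) := mul_one _
    · intro t ht
      rw [uIoc_of_le hx0] at ht
      have ht1 : t ∈ Icc (0:ℝ) 1 := ⟨ht.1.le, ht.2.trans hx1⟩
      have ht2 : t ∈ Icc (0:ℝ) x := ⟨ht.1.le, ht.2⟩
      rw [norm_mul, norm_div, norm_neg, Complex.norm_real, Real.norm_eq_abs, hnorm2k]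
      calc |q' t| * (‖Complex.sin (k*((x - 2*t : ℝ):ℂ))‖/(2*‖k‖))
          ≤ C' * (Real.exp (τ*x)/(2*‖k‖)) := by
            apply mul_le_mul (hq'b t ht1) ?_ (by positivity)
              (le_trans zero_le_one hC'1)
            gcongr
            exact hsin2b t ht2
        _ = C'*Real.exp (τ*x)/(2*‖k‖) := by ring
  have hJb : ‖J‖ ≤ (2*C + C')*Real.exp (τ*x)/(2*‖k‖) := by
    rw [hJeq]
    calc ‖(F x - F 0) - ∫ t in (0:ℝ)..x, (q' t : ℂ) * (-Complex.sin (k*((x - 2*t : ℝ):ℂ)) / (2*k))‖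
        ≤ ‖F x - F 0‖
          + ‖∫ t in (0:ℝ)..x, (q' t : ℂ) * (-Complex.sin (k*((x - 2*t : ℝ):ℂ)) / (2*k))‖ :=
          norm_sub_le _ _
      _ ≤ (‖F x‖ + ‖F 0‖)
          + ‖∫ t in (0:ℝ)..x, (q' t : ℂ) * (-Complex.sin (k*((x - 2*t : ℝ):ℂ)) / (2*k))‖ := by
          gcongr
          exact norm_sub_le _ _
      _ ≤ (C*Real.exp (τ*x)/(2*‖k‖) + C*Real.exp (τ*x)/(2*‖k‖)) + C'*Real.exp (τ*x)/(2*‖k‖) := by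
          gcongr
      _ = (2*C + C')*Real.exp (τ*x)/(2*‖k‖) := by ring
  -- final assembly
  rw [hdecomp]
  have hk3 : (0:ℝ) < ‖k‖^3 := by positivity
  have hE0 : (0:ℝ) ≤ Real.exp (τ*x) := (Real.exp_pos _).le
  have hnorm2k2 : ‖(2*k^2 : ℂ)‖ = 2*‖k‖^2 := by
    rw [norm_mul, norm_pow]
    norm_num
  calc ‖I1/k + J/(2*k^2)‖ ≤ ‖I1‖/‖k‖ + ‖J‖/(2*‖k‖^2) := by
        refine le_trans (norm_add_le _ _) ?_
        rw [norm_div, norm_div, hnorm2k2]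
    _ ≤ (2*C^2*Real.exp (τ*x)/‖k‖^2)/‖k‖ + ((2*C + C')*Real.exp (τ*x)/(2*‖k‖))/(2*‖k‖^2) := by
        gcongr
    _ = (2*C^2 + (2*C + C')/4) * Real.exp (τ*x) / ‖k‖^3 := by
        field_simp
        ring
    _ ≤ (2*C^2 + (2*C + C')/4 + 1) * Real.exp (τ*x) / ‖k‖^3 := by
        refine (div_le_div_iff_of_pos_right hk3).2 (mul_le_mul_of_nonneg_right (by linarith) hE0)
    _ = (2*C^2 + (2*C + C')/4 + 1) * ‖k‖⁻¹ ^ 3 * Real.exp (τ*x) := by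
        rw [inv_pow]
        ring
end

section
/- (Lemma 2, case h = ∞, H ∈ ℝ.) For the problem with boundary conditions y(0) = 0 and y'(1) + H·y(1) − γ₁·y(ξ₁) = 0, the eigenfunction φ(·,λₙ) = S(·,λₙ) corresponding to the eigenvalue λₙ satisfies, for sufficiently large n and uniformly for x ∈ [0,1], φ(x,λₙ) = sin(kₙx)/kₙ − (cos(kₙx)/kₙ²)·Q(x) + O(1/kₙ³), where kₙ = √λₙ. -/
open Set Filter Asymptotics
open intervalIntegral

/-- The boundary form `V(y) = y'(1) + H y(1) - γ₁ y(ξ₁)`. -/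
def Vform (H γ1 ξ1 : ℝ) (y y' : ℝ → ℂ) : ℂ := y' 1 + (H:ℂ) * y 1 - (γ1:ℂ) * y ξ1

/-- `lam` enumerates the zeros of `Δ` (the eigenvalues), ordered by modulus. -/
def EnumeratesZeros (Δ : ℂ → ℂ) (lam : ℕ → ℂ) : Prop :=
  Function.Injective lam ∧ (∀ n, Δ (lam n) = 0) ∧ (∀ μ : ℂ, Δ μ = 0 → ∃ n, lam n = μ) ∧
    Monotone fun n => ‖lam n‖

lemma norm_sin_ofReal_le (r : ℝ) : ‖Complex.sin ((r:ℝ):ℂ)‖ ≤ 1 := by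
  rw [← Complex.ofReal_sin, Complex.norm_real, Real.norm_eq_abs]
  exact abs_le.mpr ⟨Real.neg_one_le_sin r, Real.sin_le_one r⟩

lemma norm_cos_ofReal_le (r : ℝ) : ‖Complex.cos ((r:ℝ):ℂ)‖ ≤ 1 := by
  rw [← Complex.ofReal_cos, Complex.norm_real, Real.norm_eq_abs]
  exact abs_le.mpr ⟨Real.neg_one_le_cos r, Real.cos_le_one r⟩

lemma myFTC {E : Type*} [NormedAddCommGroup E] [NormedSpace ℝ E] [CompleteSpace E]
    (f f' : ℝ → E)
    (hd : ∀ t ∈ Icc (0:ℝ) 1, HasDerivWithinAt f (f' t) (Icc 0 1) t)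
    (hc : ContinuousOn f' (Icc 0 1)) {x : ℝ} (hx : x ∈ Icc (0:ℝ) 1) :
    ∫ t in (0:ℝ)..x, f' t = f x - f 0 := by
  apply integral_eq_sub_of_hasDeriv_right_of_le hx.1
  · exact fun t ht => ((hd t ⟨ht.1, ht.2.trans hx.2⟩).continuousWithinAt).mono
      (Icc_subset_Icc le_rfl hx.2)
  · intro t ht
    exact (hd t ⟨ht.1.le, ht.2.le.trans hx.2⟩).mono_of_mem_nhdsWithin
      (nhdsWithin_mono t Ioi_subset_Ici_self
        (Icc_mem_nhdsGE_of_mem ⟨ht.1.le, lt_of_lt_of_le ht.2 hx.2⟩))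
  · exact (hc.mono (Icc_subset_Icc le_rfl hx.2)).intervalIntegrable_of_Icc hx.1

lemma hasDerivAt_linC (a b : ℝ) (t : ℝ) :
    HasDerivAt (fun u : ℝ => (a:ℂ) * ((b:ℂ) - (u:ℂ))) (-(a:ℂ)) t := by
  have h : HasDerivAt (fun z : ℂ => (a:ℂ) * ((b:ℂ) - z)) (-(a:ℂ)) (t:ℂ) := by
    simpa using (((hasDerivAt_id ((t:ℝ):ℂ)).const_sub (b:ℂ)).const_mul (a:ℂ))
  exact h.comp_ofReal

lemma sin_mul_sin (a b : ℝ) :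
    Real.sin a * Real.sin b = (Real.cos (a - b) - Real.cos (a + b)) / 2 := by
  rw [Real.cos_sub, Real.cos_add]; ring

theorem key (q : ℝ → ℝ) (hq : ContDiffOn ℝ 1 q (Set.Icc 0 1)) :
    ∃ (M K₀ : ℝ), 0 < M ∧ 1 ≤ K₀ ∧ ∀ κ : ℝ, K₀ ≤ κ →
      ∀ y y' : ℝ → ℂ, IsSLSolution q (((κ^2 : ℝ)):ℂ) y y' → y 0 = 0 → y' 0 = 1 →
      ∀ x ∈ Set.Icc (0:ℝ) 1,
        ‖y x - (Complex.sin ((κ:ℂ) * (x:ℂ)) / (κ:ℂ) -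
          Complex.cos ((κ:ℂ) * (x:ℂ)) / (κ:ℂ)^2 * (((1/2) * ∫ t in (0:ℝ)..x, q t : ℝ) : ℂ))‖ ≤
        M / κ^3 := by
  have qc : ContinuousOn q (Icc 0 1) := hq.continuousOn
  obtain ⟨Cq₀, hCq₀⟩ := isCompact_Icc.exists_bound_of_continuousOn qc
  set Cq := max Cq₀ 0 with hCqdef
  have hCq : ∀ t ∈ Icc (0:ℝ) 1, |q t| ≤ Cq := fun t ht => (hCq₀ t ht).trans (le_max_left _ _)
  have hCq0 : 0 ≤ Cq := le_max_right _ _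
  set q' := derivWithin q (Icc (0:ℝ) 1) with hq'def
  have hq'c : ContinuousOn q' (Icc 0 1) :=
    hq.continuousOn_derivWithin (uniqueDiffOn_Icc one_pos) le_rfl
  have hq'd : ∀ t ∈ Icc (0:ℝ) 1, HasDerivWithinAt q (q' t) (Icc 0 1) t :=
    fun t ht => ((hq.differentiableOn one_ne_zero) t ht).hasDerivWithinAt
  obtain ⟨Cq'₀, hCq'₀⟩ := isCompact_Icc.exists_bound_of_continuousOn hq'c
  set Cq' := max Cq'₀ 0 with hCq'def
  have hCq' : ∀ t ∈ Icc (0:ℝ) 1, |q' t| ≤ Cq' := fun t ht => (hCq'₀ t ht).trans (le_max_left _ _)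
  have hCq'0 : 0 ≤ Cq' := le_max_right _ _
  refine ⟨2*Cq^2 + (2*Cq + Cq')/4 + 1, max 1 (2*Cq), by positivity, le_max_left _ _, ?_⟩
  intro κ hκ y y' hsol hy0 hy'0
  have hκ1 : (1:ℝ) ≤ κ := le_trans (le_max_left _ _) hκ
  have hκ0 : (0:ℝ) < κ := lt_of_lt_of_le zero_lt_one hκ1
  have hκC : 2*Cq ≤ κ := le_trans (le_max_right _ _) hκ
  have hκne : (κ:ℂ) ≠ 0 := by exact_mod_cast hκ0.ne'
  have hκn : ‖(κ:ℂ)‖ = κ := by rw [Complex.norm_real, Real.norm_eq_abs, abs_of_pos hκ0]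
  obtain ⟨hy1, hy2⟩ := hsol
  have hyc : ContinuousOn y (Icc 0 1) := fun t ht => (hy1 t ht).continuousWithinAt
  have hcq : ContinuousOn (fun t => ((q t : ℝ):ℂ)) (Icc 0 1) :=
    Complex.continuous_ofReal.comp_continuousOn qc
  have hcsin : ∀ x : ℝ, Continuous (fun t : ℝ => Complex.sin ((κ:ℂ)*((x:ℂ)-(t:ℂ)))) := by
    intro x
    exact Complex.continuous_sin.comp
      (continuous_const.mul (continuous_const.sub Complex.continuous_ofReal))
  -- the Volterra integral equation
  have hIE : ∀ x ∈ Icc (0:ℝ) 1, y x = Complex.sin ((κ:ℂ)*(x:ℂ))/(κ:ℂ)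
      + ∫ t in (0:ℝ)..x, (q t:ℂ) * y t * Complex.sin ((κ:ℂ)*((x:ℂ)-(t:ℂ))) / (κ:ℂ) := by
    intro x hx
    set F : ℝ → ℂ := fun t => y' t * Complex.sin ((κ:ℂ)*((x:ℂ)-(t:ℂ)))/(κ:ℂ)
        + y t * Complex.cos ((κ:ℂ)*((x:ℂ)-(t:ℂ))) with hFdef
    have hFd : ∀ t ∈ Icc (0:ℝ) 1, HasDerivWithinAt F
        ((q t:ℂ) * y t * Complex.sin ((κ:ℂ)*((x:ℂ)-(t:ℂ)))/(κ:ℂ)) (Icc 0 1) t := by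
      intro t ht
      have haff := (hasDerivAt_linC κ x t).hasDerivWithinAt (s := Icc (0:ℝ) 1)
      have hsin := (Complex.hasDerivAt_sin ((κ:ℂ)*((x:ℂ)-(t:ℂ)))).comp_hasDerivWithinAt t haff
      have hcos := (Complex.hasDerivAt_cos ((κ:ℂ)*((x:ℂ)-(t:ℂ)))).comp_hasDerivWithinAt t haff
      have h3 := (((hy2 t ht).mul hsin).div_const (κ:ℂ)).add ((hy1 t ht).mul hcos)
      refine HasDerivWithinAt.congr_deriv h3 ?_
      simp only [Function.comp_apply]
      push_cast
      field_simp
      ring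
    have hFc : ContinuousOn
        (fun t => (q t:ℂ) * y t * Complex.sin ((κ:ℂ)*((x:ℂ)-(t:ℂ)))/(κ:ℂ)) (Icc 0 1) :=
      (((hcq.mul hyc).mul (hcsin x).continuousOn).div_const _)
    have hftc := myFTC F _ hFd hFc hx
    have hFx : F x = y x := by simp [hFdef]
    have hF0 : F 0 = Complex.sin ((κ:ℂ)*(x:ℂ))/(κ:ℂ) := by simp [hFdef, hy0, hy'0]
    rw [hftc, hFx, hF0]; ring
  -- bound on integrals of the Volterra type
  have hintb : ∀ (z : ℝ → ℂ) (D : ℝ), (∀ t ∈ Icc (0:ℝ) 1, ‖z t‖ ≤ D) →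
      ∀ x ∈ Icc (0:ℝ) 1,
      ‖∫ t in (0:ℝ)..x, (q t:ℂ) * z t * Complex.sin ((κ:ℂ)*((x:ℂ)-(t:ℂ)))/(κ:ℂ)‖
        ≤ Cq * D / κ := by
    intro z D hD x hx
    have hD0 : 0 ≤ D := le_trans (norm_nonneg _) (hD 0 (left_mem_Icc.mpr zero_le_one))
    refine le_trans (intervalIntegral.norm_integral_le_of_norm_le_const (C := Cq*D/κ) ?_) ?_
    · intro t ht
      rw [Set.uIoc_of_le hx.1] at ht
      have htI : t ∈ Icc (0:ℝ) 1 := ⟨ht.1.le, ht.2.trans hx.2⟩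
      have harg : (κ:ℂ)*((x:ℂ)-(t:ℂ)) = ((κ*(x-t):ℝ):ℂ) := by push_cast; ring
      rw [norm_div, norm_mul, norm_mul, harg, hκn]
      have h1 : ‖((q t : ℝ):ℂ)‖ ≤ Cq := by
        rw [Complex.norm_real, Real.norm_eq_abs]; exact hCq t htI
      calc ‖((q t : ℝ):ℂ)‖ * ‖z t‖ * ‖Complex.sin ((κ*(x-t):ℝ):ℂ)‖ / κ
          ≤ Cq * D * 1 / κ := by
            gcongr <;> first
              | exact h1
              | exact hD t htI
              | exact norm_sin_ofReal_le _
        _ = Cq * D / κ := by ring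
    · have hx1 : |x - 0| ≤ 1 := by rw [sub_zero, abs_of_nonneg hx.1]; exact hx.2
      exact mul_le_of_le_one_right (by positivity) hx1
  -- max of ‖y‖
  obtain ⟨t₀, ht₀, hBmax⟩ := isCompact_Icc.exists_isMaxOn (nonempty_Icc.mpr zero_le_one)
    (hyc.norm)
  set B := ‖y t₀‖ with hBdef
  have hBb : ∀ t ∈ Icc (0:ℝ) 1, ‖y t‖ ≤ B := fun t ht => hBmax ht
  have hB0 : 0 ≤ B := norm_nonneg _
  have hB : B ≤ 2/κ := by
    have h := hIE t₀ ht₀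
    have h2 := hintb y B hBb t₀ ht₀
    have h3 : ‖Complex.sin ((κ:ℂ)*(t₀:ℂ))/(κ:ℂ)‖ ≤ 1/κ := by
      have harg : (κ:ℂ)*(t₀:ℂ) = ((κ*t₀:ℝ):ℂ) := by push_cast; ring
      rw [norm_div, harg, hκn]
      gcongr
      exact norm_sin_ofReal_le _
    have h4 : B ≤ 1/κ + Cq*B/κ := by
      calc B = ‖y t₀‖ := rfl
        _ ≤ ‖Complex.sin ((κ:ℂ)*(t₀:ℂ))/(κ:ℂ)‖
            + ‖∫ t in (0:ℝ)..t₀, (q t:ℂ) * y t * Complex.sin ((κ:ℂ)*((t₀:ℂ)-(t:ℂ)))/(κ:ℂ)‖ := by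
              rw [h]; exact norm_add_le _ _
        _ ≤ 1/κ + Cq*B/κ := add_le_add h3 h2
    rw [le_div_iff₀ hκ0]
    have h5 : κ * (1/κ + Cq*B/κ) = 1 + Cq*B := by field_simp
    nlinarith [mul_le_mul_of_nonneg_left h4 hκ0.le]
  have hB2 : ∀ t ∈ Icc (0:ℝ) 1, ‖y t - Complex.sin ((κ:ℂ)*(t:ℂ))/(κ:ℂ)‖ ≤ 2*Cq/κ^2 := by
    intro t ht
    have h := hIE t ht
    have h2 := hintb y (2/κ) (fun s hs => (hBb s hs).trans hB) t ht
    calc ‖y t - Complex.sin ((κ:ℂ)*(t:ℂ))/(κ:ℂ)‖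
        = ‖∫ s in (0:ℝ)..t, (q s:ℂ) * y s * Complex.sin ((κ:ℂ)*((t:ℂ)-(s:ℂ)))/(κ:ℂ)‖ := by
          congr 1; rw [h]; ring
      _ ≤ Cq * (2/κ) / κ := h2
      _ = 2*Cq/κ^2 := by ring
  -- now fix x
  intro x hx
  set R : ℝ := ∫ t in (0:ℝ)..x, q t * Real.sin (κ*t) * Real.sin (κ*(x-t)) with hRdef
  have hIccsub : Icc (0:ℝ) x ⊆ Icc 0 1 := Icc_subset_Icc le_rfl hx.2
  have hkey3 : ‖y x - Complex.sin ((κ:ℂ)*(x:ℂ))/(κ:ℂ) - (R:ℂ)/(κ:ℂ)^2‖ ≤ 2*Cq^2/κ^3 := by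
    have hint1 : IntervalIntegrable
        (fun t => (q t:ℂ) * y t * Complex.sin ((κ:ℂ)*((x:ℂ)-(t:ℂ)))/(κ:ℂ))
        MeasureTheory.volume 0 x :=
      ((((hcq.mul hyc).mul (hcsin x).continuousOn).div_const _).mono
        hIccsub).intervalIntegrable_of_Icc hx.1
    have hcsin2 : Continuous (fun t : ℝ => Complex.sin ((κ:ℂ)*((t:ℝ):ℂ))/(κ:ℂ)) :=
      (Complex.continuous_sin.comp (continuous_const.mul Complex.continuous_ofReal)).div_const _
    have hint2 : IntervalIntegrable
        (fun t => (q t:ℂ) * (Complex.sin ((κ:ℂ)*(t:ℂ))/(κ:ℂ))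
          * Complex.sin ((κ:ℂ)*((x:ℂ)-(t:ℂ)))/(κ:ℂ))
        MeasureTheory.volume 0 x :=
      ((((hcq.mul hcsin2.continuousOn).mul (hcsin x).continuousOn).div_const _).mono
        hIccsub).intervalIntegrable_of_Icc hx.1
    have hg2 : (∫ t in (0:ℝ)..x, (q t:ℂ) * (Complex.sin ((κ:ℂ)*(t:ℂ))/(κ:ℂ))
        * Complex.sin ((κ:ℂ)*((x:ℂ)-(t:ℂ)))/(κ:ℂ)) = (R:ℂ)/(κ:ℂ)^2 := by
      have e2 : (fun t : ℝ => (q t:ℂ) * (Complex.sin ((κ:ℂ)*(t:ℂ))/(κ:ℂ))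
          * Complex.sin ((κ:ℂ)*((x:ℂ)-(t:ℂ)))/(κ:ℂ))
          = fun t : ℝ => (((q t * Real.sin (κ*t) * Real.sin (κ*(x-t)) : ℝ)):ℂ)/(κ:ℂ)^2 := by
        funext t
        have a1 : (κ:ℂ)*(t:ℂ) = ((κ*t:ℝ):ℂ) := by push_cast; ring
        have a2 : (κ:ℂ)*((x:ℂ)-(t:ℂ)) = ((κ*(x-t):ℝ):ℂ) := by push_cast; ring
        rw [a1, a2, ← Complex.ofReal_sin, ← Complex.ofReal_sin]
        push_cast
        ring
      rw [e2, intervalIntegral.integral_div, intervalIntegral.integral_ofReal]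
    have hsub : (∫ t in (0:ℝ)..x, (q t:ℂ) * (y t - Complex.sin ((κ:ℂ)*(t:ℂ))/(κ:ℂ))
          * Complex.sin ((κ:ℂ)*((x:ℂ)-(t:ℂ)))/(κ:ℂ))
        = (∫ t in (0:ℝ)..x, (q t:ℂ) * y t * Complex.sin ((κ:ℂ)*((x:ℂ)-(t:ℂ)))/(κ:ℂ))
          - (∫ t in (0:ℝ)..x, (q t:ℂ) * (Complex.sin ((κ:ℂ)*(t:ℂ))/(κ:ℂ))
          * Complex.sin ((κ:ℂ)*((x:ℂ)-(t:ℂ)))/(κ:ℂ)) := by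
      rw [← intervalIntegral.integral_sub hint1 hint2]
      congr 1; funext t; ring
    have hI1 : (∫ t in (0:ℝ)..x, (q t:ℂ) * y t * Complex.sin ((κ:ℂ)*((x:ℂ)-(t:ℂ)))/(κ:ℂ))
        = y x - Complex.sin ((κ:ℂ)*(x:ℂ))/(κ:ℂ) := by
      rw [hIE x hx]; ring
    have hsplit : y x - Complex.sin ((κ:ℂ)*(x:ℂ))/(κ:ℂ) - (R:ℂ)/(κ:ℂ)^2
        = ∫ t in (0:ℝ)..x, (q t:ℂ) * (y t - Complex.sin ((κ:ℂ)*(t:ℂ))/(κ:ℂ))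
          * Complex.sin ((κ:ℂ)*((x:ℂ)-(t:ℂ)))/(κ:ℂ) := by
      rw [hsub, hg2, hI1]
    rw [hsplit]
    refine le_trans (hintb (fun t => y t - Complex.sin ((κ:ℂ)*(t:ℂ))/(κ:ℂ)) (2*Cq/κ^2)
      hB2 x hx) (le_of_eq (by ring))
  -- the oscillatory integral J and its bound
  set J : ℝ := ∫ t in (0:ℝ)..x, q t * Real.cos (κ*(x-2*t)) with hJdef
  have haux : Continuous (fun t : ℝ => κ*(x-2*t)) :=
    continuous_const.mul (continuous_const.sub (continuous_const.mul continuous_id'))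
  have hccos : Continuous (fun t : ℝ => Real.cos (κ*(x-2*t))) :=
    Real.continuous_cos.comp haux
  have hcsin3 : Continuous (fun t : ℝ => Real.sin (κ*(x-2*t))) :=
    Real.continuous_sin.comp haux
  have hR : R = (1/2)*J - Real.cos (κ*x) * ((1/2) * ∫ t in (0:ℝ)..x, q t) := by
    have e : (fun t => q t * Real.sin (κ*t) * Real.sin (κ*(x-t)))
        = fun t => (1/2) * (q t * Real.cos (κ*(x-2*t))) - Real.cos (κ*x) * ((1/2) * q t) := by
      funext t
      rw [mul_assoc, sin_mul_sin]
      have h2 : κ*t - κ*(x-t) = -(κ*(x-2*t)) := by ring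
      have h3 : κ*t + κ*(x-t) = κ*x := by ring
      rw [h2, h3, Real.cos_neg]
      ring
    have hi1 : IntervalIntegrable (fun t => (1/2) * (q t * Real.cos (κ*(x-2*t))))
        MeasureTheory.volume 0 x :=
      ((continuousOn_const.mul (qc.mul hccos.continuousOn)).mono
        hIccsub).intervalIntegrable_of_Icc hx.1
    have hi2 : IntervalIntegrable (fun t => Real.cos (κ*x) * ((1/2) * q t))
        MeasureTheory.volume 0 x :=
      ((continuousOn_const.mul (continuousOn_const.mul qc)).mono
        hIccsub).intervalIntegrable_of_Icc hx.1
    rw [hRdef, e, intervalIntegral.integral_sub hi1 hi2, intervalIntegral.integral_const_mul,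
      intervalIntegral.integral_const_mul, intervalIntegral.integral_const_mul]
  have hJ : |J| ≤ (2*Cq + Cq')/(2*κ) := by
    set G : ℝ → ℝ := fun t => -(Real.sin (κ*(x-2*t)) * q t / (2*κ)) with hGdef
    have hGd : ∀ t ∈ Icc (0:ℝ) 1, HasDerivWithinAt G
        (q t * Real.cos (κ*(x-2*t)) - Real.sin (κ*(x-2*t)) * q' t / (2*κ)) (Icc 0 1) t := by
      intro t ht
      have haff : HasDerivAt (fun u:ℝ => κ*(x-2*u)) (κ*(-2)) t := by
        simpa using (((hasDerivAt_id t).const_mul (2:ℝ)).const_sub x).const_mul κ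
      have hsin := (haff.sin).hasDerivWithinAt (s := Icc (0:ℝ) 1)
      have h1 := ((hsin.mul (hq'd t ht)).div_const (2*κ)).neg
      have hval : -((Real.cos (κ*(x-2*t)) * (κ*(-2)) * q t + Real.sin (κ*(x-2*t)) * q' t) / (2*κ))
          = q t * Real.cos (κ*(x-2*t)) - Real.sin (κ*(x-2*t)) * q' t / (2*κ) := by
        field_simp
        ring
      rw [← hval]
      exact h1
    have hGc : ContinuousOn
        (fun t => q t * Real.cos (κ*(x-2*t)) - Real.sin (κ*(x-2*t)) * q' t / (2*κ))
        (Icc 0 1) :=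
      (qc.mul hccos.continuousOn).sub ((hcsin3.continuousOn.mul hq'c).div_const _)
    have hftc := myFTC G _ hGd hGc hx
    have hi3 : IntervalIntegrable
        (fun t => q t * Real.cos (κ*(x-2*t)) - Real.sin (κ*(x-2*t)) * q' t / (2*κ))
        MeasureTheory.volume 0 x :=
      (hGc.mono hIccsub).intervalIntegrable_of_Icc hx.1
    have hi4 : IntervalIntegrable (fun t => Real.sin (κ*(x-2*t)) * q' t / (2*κ))
        MeasureTheory.volume 0 x :=
      (((hcsin3.continuousOn.mul hq'c).div_const _).mono hIccsub).intervalIntegrable_of_Icc hx.1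
    have hJeq : J = (G x - G 0) + ∫ t in (0:ℝ)..x, Real.sin (κ*(x-2*t)) * q' t / (2*κ) := by
      rw [hJdef, ← hftc, ← intervalIntegral.integral_add hi3 hi4]
      congr 1; funext t; ring
    have hGb : ∀ t ∈ Icc (0:ℝ) 1, |G t| ≤ Cq/(2*κ) := by
      intro t ht
      rw [hGdef]
      simp only
      rw [abs_neg, abs_div, abs_mul, abs_of_pos (by positivity : (0:ℝ) < 2*κ)]
      calc |Real.sin (κ*(x-2*t))| * |q t| / (2*κ) ≤ 1 * Cq / (2*κ) := by
            gcongr <;> first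
              | exact abs_le.mpr ⟨Real.neg_one_le_sin _, Real.sin_le_one _⟩
              | exact hCq t ht
        _ = Cq/(2*κ) := by ring
    have hs4 : |∫ t in (0:ℝ)..x, Real.sin (κ*(x-2*t)) * q' t / (2*κ)| ≤ Cq'/(2*κ) := by
      rw [← Real.norm_eq_abs]
      refine le_trans (intervalIntegral.norm_integral_le_of_norm_le_const (C := Cq'/(2*κ)) ?_) ?_
      · intro t ht
        rw [Set.uIoc_of_le hx.1] at ht
        have htI : t ∈ Icc (0:ℝ) 1 := ⟨ht.1.le, ht.2.trans hx.2⟩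
        rw [Real.norm_eq_abs, abs_div, abs_mul, abs_of_pos (by positivity : (0:ℝ) < 2*κ)]
        calc |Real.sin (κ*(x-2*t))| * |q' t| / (2*κ) ≤ 1 * Cq' / (2*κ) := by
              gcongr <;> first
                | exact abs_le.mpr ⟨Real.neg_one_le_sin _, Real.sin_le_one _⟩
                | exact hCq' t htI
          _ = Cq'/(2*κ) := by ring
      · have hx1 : |x - 0| ≤ 1 := by rw [sub_zero, abs_of_nonneg hx.1]; exact hx.2
        exact mul_le_of_le_one_right (by positivity) hx1
    have h0mem : (0:ℝ) ∈ Icc (0:ℝ) 1 := left_mem_Icc.mpr zero_le_one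
    calc |J| ≤ |G x - G 0| + |∫ t in (0:ℝ)..x, Real.sin (κ*(x-2*t)) * q' t / (2*κ)| := by
          rw [hJeq]; exact abs_add_le _ _
      _ ≤ (|G x| + |G 0|) + Cq'/(2*κ) := add_le_add (abs_sub _ _) hs4
      _ ≤ (Cq/(2*κ) + Cq/(2*κ)) + Cq'/(2*κ) := by
          have g1 := hGb x hx
          have g2 := hGb 0 h0mem
          gcongr
      _ = (2*Cq + Cq')/(2*κ) := by ring
  -- final assembly
  have hfin : y x - (Complex.sin ((κ:ℂ)*(x:ℂ))/(κ:ℂ) - Complex.cos ((κ:ℂ)*(x:ℂ))/(κ:ℂ)^2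
        * (((1/2) * ∫ t in (0:ℝ)..x, q t : ℝ):ℂ))
      = (y x - Complex.sin ((κ:ℂ)*(x:ℂ))/(κ:ℂ) - (R:ℂ)/(κ:ℂ)^2)
        + (((1/2)*J : ℝ):ℂ)/(κ:ℂ)^2 := by
    have harg : (κ:ℂ)*(x:ℂ) = ((κ*x:ℝ):ℂ) := by push_cast; ring
    rw [hR, harg, ← Complex.ofReal_cos]
    push_cast
    ring
  rw [hfin]
  have h2n : ‖(((1/2)*J : ℝ):ℂ)/(κ:ℂ)^2‖ ≤ ((2*Cq + Cq')/4)/κ^3 := by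
    have hn1 : ‖(((1/2)*J : ℝ):ℂ)‖ = (1/2)*|J| := by
      rw [Complex.norm_real, Real.norm_eq_abs, abs_mul]
      norm_num
    have hn2 : ‖(κ:ℂ)^2‖ = κ^2 := by rw [norm_pow, hκn]
    rw [norm_div, hn1, hn2]
    calc (1/2)*|J|/κ^2 ≤ (1/2)*((2*Cq + Cq')/(2*κ))/κ^2 := by
          gcongr ?_ / κ^2
          linarith
      _ = ((2*Cq + Cq')/4)/κ^3 := by ring
  calc ‖(y x - Complex.sin ((κ:ℂ)*(x:ℂ))/(κ:ℂ) - (R:ℂ)/(κ:ℂ)^2)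
        + (((1/2)*J : ℝ):ℂ)/(κ:ℂ)^2‖
      ≤ ‖y x - Complex.sin ((κ:ℂ)*(x:ℂ))/(κ:ℂ) - (R:ℂ)/(κ:ℂ)^2‖
        + ‖(((1/2)*J : ℝ):ℂ)/(κ:ℂ)^2‖ := norm_add_le _ _
    _ ≤ 2*Cq^2/κ^3 + ((2*Cq + Cq')/4)/κ^3 := add_le_add hkey3 h2n
    _ ≤ (2*Cq^2 + (2*Cq + Cq')/4 + 1)/κ^3 := by
        rw [← add_div]
        gcongr ?_ / κ^3
        linarith

/-- Lemma 2, case `h = ∞`, `H ∈ ℝ`: for the problem with `y(0) = 0` and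
`y'(1) + H y(1) - γ₁ y(ξ₁) = 0`, the eigenfunction `φ(·,λₙ) = S(·,λₙ)` satisfies, for large `n`
and uniformly for `x ∈ [0,1]`,
`φ(x,λₙ) = sin(kₙx)/kₙ - (cos(kₙx)/kₙ²) Q(x) + O(1/kₙ³)`. -/
theorem stmt_8
    (q : ℝ → ℝ) (hq : ContDiffOn ℝ 1 q (Set.Icc 0 1))
    (H γ1 : ℝ) (hγ1 : γ1 ≠ 0)
    (ξ1 : ℚ) (hξ1 : (ξ1:ℝ) ∈ Set.Ioo 0 1)
    (S S' : ℂ → ℝ → ℂ)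
    (hsolS : ∀ lam : ℂ, IsSLSolution q lam (S lam) (S' lam))
    (hS0 : ∀ lam : ℂ, S lam 0 = 0) (hS'0 : ∀ lam : ℂ, S' lam 0 = 1)
    (Δ : ℂ → ℂ)
    (hΔ : ∀ lam : ℂ, Δ lam = Vform H γ1 ξ1 (S lam) (S' lam))
    (lam : ℕ → ℂ) (hen : EnumeratesZeros Δ lam)
    (hreal : ∀ᶠ n in atTop, (lam n).im = 0)
    (k : ℕ → ℂ) (hk2 : ∀ n, k n ^ 2 = lam n)
    (hkasym : ∃ (c : ℝ) (N : ℕ), ∀ n ≥ N, ‖k n - (((n + 1/2) * Real.pi : ℝ) : ℂ)‖ ≤ c / n) :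
    ∃ (M : ℝ) (N : ℕ), 0 < M ∧ ∀ n ≥ N, ∀ x ∈ Set.Icc (0:ℝ) 1,
      ‖S (lam n) x -
        (Complex.sin (k n * (x:ℂ)) / k n -
          Complex.cos (k n * (x:ℂ)) / k n ^ 2 * (((1/2) * ∫ t in (0:ℝ)..x, q t : ℝ) : ℂ))‖ ≤
        M / ‖k n‖ ^ 3 := by
  obtain ⟨M, K₀, hM, hK₀, hkey⟩ := key q hq
  rw [Filter.eventually_atTop] at hreal
  obtain ⟨N₁, hN₁⟩ := hreal
  obtain ⟨c, N₂, hc⟩ := hkasym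
  set N₃ : ℕ := ⌈c + K₀⌉₊ + 1 with hN₃
  refine ⟨M, max N₁ (max N₂ N₃), hM, ?_⟩
  intro n hn x hx
  have hn1 : N₁ ≤ n := le_trans (le_max_left _ _) hn
  have hn2 : N₂ ≤ n := le_trans (le_max_left _ _) (le_trans (le_max_right _ _) hn)
  have hn3 : N₃ ≤ n := le_trans (le_max_right N₂ N₃) (le_trans (le_max_right N₁ _) hn)
  have hK0pos : (0:ℝ) < K₀ := lt_of_lt_of_le one_pos hK₀
  have hnc : c + K₀ + 1 ≤ (n:ℝ) := by
    have h1 : (N₃:ℝ) ≤ (n:ℝ) := Nat.cast_le.mpr hn3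
    have h2 : c + K₀ ≤ (⌈c + K₀⌉₊ : ℝ) := Nat.le_ceil _
    rw [hN₃] at h1
    push_cast at h1
    linarith
  have hc0 : 0 ≤ c := by
    have hm : (0:ℝ) < ((max N₂ 1 : ℕ):ℝ) := by
      have : (1:ℕ) ≤ max N₂ 1 := le_max_right _ _
      exact_mod_cast lt_of_lt_of_le one_pos this
    have h := le_trans (norm_nonneg _) (hc (max N₂ 1) (le_max_left _ _))
    rw [le_div_iff₀ hm] at h
    simpa using h
  have hnpos : (0:ℝ) < (n:ℝ) := by linarith
  have hre : K₀ ≤ (k n).re := by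
    have hKR := hc n hn2
    have h1 : |(k n).re - ((n:ℝ) + 1/2) * Real.pi| ≤ c / n := by
      have habs := Complex.abs_re_le_norm (k n - ((((n:ℝ) + 1/2) * Real.pi : ℝ):ℂ))
      rw [Complex.sub_re, Complex.ofReal_re] at habs
      exact le_trans habs hKR
    have h2 : c / n ≤ c := div_le_self hc0 (by linarith : (1:ℝ) ≤ (n:ℝ))
    have h3 := (abs_le.mp h1).1
    nlinarith [Real.pi_gt_three, mul_lt_mul_of_pos_left Real.pi_gt_three hnpos]
  have hrepos : 0 < (k n).re := lt_of_lt_of_le hK0pos hre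
  have him : (k n).im = 0 := by
    have h2 : (k n ^ 2).im = 0 := by rw [hk2]; exact hN₁ n hn1
    rw [pow_two, Complex.mul_im] at h2
    have h3 : (k n).re * (k n).im = 0 := by linarith
    rcases mul_eq_zero.mp h3 with h | h
    · exact absurd h hrepos.ne'
    · exact h
  set κ : ℝ := (k n).re with hκdef
  have hkn : k n = (κ:ℂ) := Complex.ext rfl him
  have hlamn : lam n = ((κ^2 : ℝ):ℂ) := by rw [← hk2 n, hkn]; push_cast; ring
  have hb := hkey κ hre (S (lam n)) (S' (lam n)) (hlamn ▸ hsolS (lam n)) (hS0 _) (hS'0 _) x hx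
  rw [hkn]
  have hnormκ : ‖(κ:ℂ)‖ = κ := by rw [Complex.norm_real, Real.norm_eq_abs, abs_of_pos hrepos]
  rw [hnormκ]
  exact hb
end
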